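/- Let G be a graph on n vertices with a universal vertex u. If C is the configuration that places 0 pebbles on u and an odd number of pebbles on every other vertex, with total size n + 2t − 3, then C is not t-fold u-solvable. Consequently π_t(G, u) ≥ n + 2t − 2. -/

import Mathlib

open SimpleGraph

open Classical in
/-- A single pebbling step: remove two pebbles from `u` and add one to an adjacent `v`. -/
def PebStep {V : Type*} (G : SimpleGraph V) (C C' : V → ℕ) : Prop :=
  ∃ u v, G.Adj u v ∧ 2 ≤ C u ∧
    ∀ w, C' w = if w = u then C w - 2 else if w = v then C w + 1 else C w

/-- `C` is `t`-fold `r`-solvable: some sequence of pebbling steps places `t` pebbles on `r`. -/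
def Solvable {V : Type*} (G : SimpleGraph V) (C : V → ℕ) (r : V) (t : ℕ) : Prop :=
  ∃ C', Relation.ReflTransGen (PebStep G) C C' ∧ t ≤ C' r

/-- The size of a configuration: total number of pebbles. -/
def confSize {V : Type*} [Fintype V] (C : V → ℕ) : ℕ := ∑ v, C v

/-- The potential of a configuration: the number of pairwise disjoint pairs of
pebbles sitting on common vertices, `∑ v, ⌊C v / 2⌋`. -/
def potential {V : Type*} [Fintype V] (C : V → ℕ) : ℕ := ∑ v, C v / 2

/-- Number of vertices with no pebbles. -/
noncomputable def numZeros {V : Type*} [Fintype V] (C : V → ℕ) : ℕ :=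
  {v : V | C v = 0}.ncard

/-- The `t`-pebbling number of `G` with root `r`. -/
noncomputable def piT {V : Type*} [Fintype V] (G : SimpleGraph V) (r : V) (t : ℕ) : ℕ :=
  sInf {m | ∀ C : V → ℕ, m ≤ confSize C → Solvable G C r t}

/-- The `t`-pebbling number of `G`. -/
noncomputable def piTG {V : Type*} [Fintype V] (G : SimpleGraph V) (t : ℕ) : ℕ :=
  Finset.univ.sup fun r => piT G r t

/-- `G` is `k`-connected: more than `k` vertices and deleting fewer than `k`
vertices leaves a connected graph. -/
def KConnected {V : Type*} [Fintype V] (G : SimpleGraph V) (k : ℕ) : Prop :=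
  k < Fintype.card V ∧
    ∀ S : Set V, S.ncard < k → ((⊤ : G.Subgraph).deleteVerts S).coe.Connected

/-- `u` is a universal vertex: adjacent to every other vertex. -/
def IsUniversal {V : Type*} (G : SimpleGraph V) (u : V) : Prop :=
  ∀ v, v ≠ u → G.Adj u v

set_option linter.unusedSectionVars false

section Aux
variable {V : Type*} [Fintype V] [DecidableEq V]

/-- weight of one vertex -/
def fwt (u v : V) (c : ℕ) : ℕ := if v = u then c else c / 2

/-- the potential `C u + ∑_{v ≠ u} ⌊C v / 2⌋` -/
def phiU (u : V) (C : V → ℕ) : ℕ := ∑ v, fwt u v (C v)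

lemma fwt_self (u : V) (c : ℕ) : fwt u u c = c := by simp [fwt]

lemma fwt_ne {u v : V} (h : v ≠ u) (c : ℕ) : fwt u v c = c / 2 := by simp [fwt, h]

lemma sum_upd (g : V → ℕ → ℕ) (D : V → ℕ) (y : V) (b : ℕ) :
    (∑ v, g v (Function.update D y b v)) + g y (D y) = (∑ v, g v (D v)) + g y b := by
  rw [← Finset.add_sum_erase _ (fun v => g v (Function.update D y b v)) (Finset.mem_univ y),
      ← Finset.add_sum_erase _ (fun v => g v (D v)) (Finset.mem_univ y)]
  have h1 : ∑ v ∈ Finset.univ.erase y, g v (Function.update D y b v)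
      = ∑ v ∈ Finset.univ.erase y, g v (D v) :=
    Finset.sum_congr rfl fun v hv => by
      rw [Function.update_of_ne (Finset.ne_of_mem_erase hv)]
  rw [h1, Function.update_self]
  ring

lemma pebstep_eq {C C' : V → ℕ} {x y : V} (hxy : x ≠ y)
    (hx : C' x = C x - 2) (hy : C' y = C y + 1)
    (ho : ∀ w, w ≠ x → w ≠ y → C' w = C w) :
    C' = Function.update (Function.update C x (C x - 2)) y (C y + 1) := by
  funext w
  by_cases hwx : w = x
  · subst hwx
    rw [hx]
    simp [Function.update, hxy]
  · by_cases hwy : w = y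
    · subst hwy
      rw [hy]
      simp [Function.update, hwx]
    · rw [ho w hwx hwy]
      simp [Function.update, hwx, hwy]

lemma phiU_step {G : SimpleGraph V} (u : V) {C C' : V → ℕ} (h : PebStep G C C') :
    phiU u C' ≤ phiU u C := by
  obtain ⟨x, y, hadj, h2, hform⟩ := h
  have hxy : x ≠ y := hadj.ne
  set D := Function.update C x (C x - 2) with hD
  have hDy : D y = C y := Function.update_of_ne (Ne.symm hxy) _ _
  have hfx : C' x = C x - 2 := by rw [hform x]; simp
  have hfy : C' y = C y + 1 := by rw [hform y]; simp [Ne.symm hxy]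
  have hfo : ∀ w, w ≠ x → w ≠ y → C' w = C w := fun w h1 h2 => by
    rw [hform w]; simp [h1, h2]
  have hC' : C' = Function.update D y (C y + 1) := pebstep_eq hxy hfx hfy hfo
  have e1 : phiU u C' + fwt u y (D y) = phiU u D + fwt u y (C y + 1) := by
    rw [hC']; exact sum_upd (fwt u) D y (C y + 1)
  have e2 : phiU u D + fwt u x (C x) = phiU u C + fwt u x (C x - 2) :=
    sum_upd (fwt u) C x (C x - 2)
  have hy : fwt u y (C y + 1) ≤ fwt u y (C y) + 1 := by
    by_cases hyu : y = u
    · simp [fwt, hyu]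
    · rw [fwt_ne hyu, fwt_ne hyu]; omega
  have hx : fwt u x (C x - 2) + 1 ≤ fwt u x (C x) := by
    by_cases hxu : x = u
    · subst hxu; rw [fwt_self, fwt_self]; omega
    · rw [fwt_ne hxu, fwt_ne hxu]; omega
  have hc : fwt u y (D y) = fwt u y (C y) := by rw [hDy]
  rw [hc] at e1
  omega

lemma phiU_reach {G : SimpleGraph V} (u : V) {C C' : V → ℕ}
    (h : Relation.ReflTransGen (PebStep G) C C') : phiU u C' ≤ phiU u C := by
  induction h with
  | refl => exact le_rfl
  | tail _ hstep ih => exact le_trans (phiU_step u hstep) ih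

lemma self_le_phiU (u : V) (C : V → ℕ) : C u ≤ phiU u C := by
  have := Finset.single_le_sum (f := fun v => fwt u v (C v))
    (fun v _ => Nat.zero_le _) (Finset.mem_univ u)
  simpa [phiU, fwt_self] using this

lemma confSize_le (u : V) (C : V → ℕ) : confSize C ≤ 2 * phiU u C + Fintype.card V := by
  have h : ∀ v : V, C v ≤ 2 * fwt u v (C v) + 1 := by
    intro v
    by_cases hv : v = u
    · subst hv; rw [fwt_self]; omega
    · rw [fwt_ne hv]; omega
  calc confSize C ≤ ∑ v, (2 * fwt u v (C v) + 1) := Finset.sum_le_sum fun v _ => h v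
    _ = 2 * phiU u C + Fintype.card V := by
        rw [Finset.sum_add_distrib, ← Finset.mul_sum, Finset.sum_const, Finset.card_univ,
          smul_eq_mul, mul_one]
        simp only [phiU]

lemma solvable_of_phiU {G : SimpleGraph V} {u : V} (hu : _root_.IsUniversal G u) (t : ℕ) :
    ∀ N (C : V → ℕ), confSize C ≤ N → t ≤ phiU u C → Solvable G C u t := by
  intro N
  induction N with
  | zero =>
    intro C hN hphi
    refine ⟨C, Relation.ReflTransGen.refl, ?_⟩
    have h1 : C u ≤ confSize C :=
      Finset.single_le_sum (fun v _ => Nat.zero_le _) (Finset.mem_univ u)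
    have h2 : phiU u C ≤ confSize C := by
      refine Finset.sum_le_sum fun v _ => ?_
      by_cases hv : v = u
      · subst hv; rw [fwt_self]
      · rw [fwt_ne hv]; omega
    omega
  | succ N ih =>
    intro C hN hphi
    by_cases hcu : t ≤ C u
    · exact ⟨C, Relation.ReflTransGen.refl, hcu⟩
    · push_neg at hcu
      have hsplit : phiU u C = C u + ∑ v ∈ Finset.univ.erase u, fwt u v (C v) := by
        simp only [phiU]
        rw [← Finset.add_sum_erase _ (fun v => fwt u v (C v)) (Finset.mem_univ u), fwt_self]
      have hpos : ∑ v ∈ Finset.univ.erase u, fwt u v (C v) ≠ 0 := by omega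
      obtain ⟨v, hv, hvne⟩ := Finset.exists_ne_zero_of_sum_ne_zero hpos
      have hvu : v ≠ u := Finset.ne_of_mem_erase hv
      rw [fwt_ne hvu] at hvne
      have h2 : 2 ≤ C v := by omega
      set C₂ : V → ℕ := fun w => if w = v then C w - 2 else if w = u then C w + 1 else C w
        with hC₂
      have hstep : PebStep G C C₂ := ⟨v, u, (hu v hvu).symm, h2, fun w => by
        by_cases h1 : w = v <;> by_cases h2' : w = u <;> simp [hC₂, h1, h2']⟩
      set D := Function.update C v (C v - 2) with hD
      have hDu : D u = C u := Function.update_of_ne (Ne.symm hvu) _ _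
      have heq : C₂ = Function.update D u (C u + 1) := by
        refine pebstep_eq hvu ?_ ?_ ?_ <;> simp [hC₂, hvu, Ne.symm hvu]
        intro w h1 h2
        simp [h1, h2]
      have e1 : phiU u C₂ + fwt u u (D u) = phiU u D + fwt u u (C u + 1) := by
        rw [heq]; exact sum_upd (fwt u) D u (C u + 1)
      have e2 : phiU u D + fwt u v (C v) = phiU u C + fwt u v (C v - 2) :=
        sum_upd (fwt u) C v _
      have hcu2 : fwt u u (D u) = C u := by rw [hDu, fwt_self]
      have hcu3 : fwt u u (C u + 1) = C u + 1 := fwt_self u _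
      rw [hcu2, hcu3] at e1
      rw [fwt_ne hvu, fwt_ne hvu] at e2
      have hcv : C v / 2 = (C v - 2) / 2 + 1 := by omega
      have hphi2 : phiU u C₂ = phiU u C := by omega
      have s1 : confSize C₂ + D u = confSize D + (C u + 1) := by
        rw [heq]; exact sum_upd (fun _ c => c) D u (C u + 1)
      have s2 : confSize D + C v = confSize C + (C v - 2) := sum_upd (fun _ c => c) C v _
      have hsu : D u = C u := hDu
      have hsz : confSize C₂ ≤ N := by omega
      obtain ⟨C', hpath, ht⟩ := ih C₂ hsz (by omega)
      exact ⟨C', Relation.ReflTransGen.head hstep hpath, ht⟩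

end Aux

theorem odd_config_lower_bound {V : Type*} [Fintype V] (G : SimpleGraph V)
    (u : V) (hu : _root_.IsUniversal G u) (t : ℕ) (C : V → ℕ)
    (hCu : C u = 0) (hodd : ∀ v, v ≠ u → Odd (C v))
    (hsize : confSize C + 3 = Fintype.card V + 2 * t) :
    ¬ Solvable G C u t ∧ Fintype.card V + 2 * t - 2 ≤ piT G u t := by
  classical
  have hcard : 1 ≤ Fintype.card V := Fintype.card_pos_iff.mpr ⟨u⟩
  have hpt : 2 * phiU u C + Fintype.card V = confSize C + 1 := by
    have h : ∀ v : V, C v = 2 * fwt u v (C v) + (if v = u then 0 else 1) := by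
      intro v
      by_cases hv : v = u
      · subst hv; rw [fwt_self]; simp [hCu]
      · rw [fwt_ne hv, if_neg hv]
        obtain ⟨k, hk⟩ := hodd v hv
        omega
    have hones : ∑ v : V, (if v = u then (0:ℕ) else 1) = Fintype.card V - 1 := by
      rw [← Finset.add_sum_erase _ _ (Finset.mem_univ u), if_pos rfl, zero_add]
      rw [Finset.sum_congr rfl fun v hv => if_neg (Finset.ne_of_mem_erase hv),
        Finset.sum_const, smul_eq_mul, mul_one, Finset.card_erase_of_mem (Finset.mem_univ u),
        Finset.card_univ]
    have hsum : confSize C = 2 * phiU u C + (Fintype.card V - 1) := by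
      simp only [confSize, phiU]
      rw [Finset.sum_congr rfl fun v _ => h v, Finset.sum_add_distrib,
        ← Finset.mul_sum, hones]
    omega
  have hns : ¬ Solvable G C u t := by
    rintro ⟨C', hpath, ht⟩
    have := le_trans (self_le_phiU u C') (phiU_reach u hpath)
    omega
  refine ⟨hns, ?_⟩
  have hmem : Fintype.card V + 2 * t ∈ {m | ∀ C : V → ℕ, m ≤ confSize C → Solvable G C u t} := by
    intro C' hC'
    have := confSize_le u C'
    exact solvable_of_phiU hu t (confSize C') C' le_rfl (by omega)
  refine le_csInf ⟨_, hmem⟩ fun m hm => ?_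
  by_contra hlt
  push_neg at hlt
  exact hns (hm C (by omega))
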